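/- Let b ≥ 2, ρ ≥ 1, Λ = (λ₁,...,λ_ρ) with λ = λ₁+...+λ_ρ, and let Ω_{b,T}^Λ(n;Z) be defined by the generating function Σ_{n≥0} Ω(n;Z) q^n = Π_{j≥0} Π_{ℓ=1}^ρ (1 + z_{ℓ,1}^{t_{ℓ,1}^j} q^{b^j} + ... + z_{ℓ,λ_ℓ}^{t_{ℓ,λ_ℓ}^j} q^{λ_ℓ·b^j}). Then Ω(0;Z) = 1, and for all n ≥ 0 and 0 ≤ j ≤ b-1, Ω(bn+j;Z) = Σ_{k=0}^{⌊λ/b⌋} Y_{bk+j} · Ω(n-k;Z^T), where Ω(m;Z) = 0 for m < 0, Z^T replaces each variable z_{ℓ,i} by z_{ℓ,i}^{t_{ℓ,i}}, and Y_ν = Σ z_{1,i₁}···z_{ρ,i_ρ} summed over all tuples with i₁+...+i_ρ = ν and 0 ≤ i_ℓ ≤ λ_ℓ (with z_{ℓ,0} = 1, and Y_μ = 0 for μ > λ). -/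

import Mathlib

open MvPolynomial

/-- The variables `z_{ℓ,i}` (`1 ≤ ℓ ≤ ρ`, `1 ≤ i ≤ λ_ℓ`), indexed by pairs
`⟨ℓ, i⟩` with `ℓ : Fin ρ` and `i : Fin (Λ ℓ)`. -/
abbrev ColorIdx (ρ : ℕ) (Λ : Fin ρ → ℕ) := (ℓ : Fin ρ) × Fin (Λ ℓ)

/-- The factor of the generating-function product indexed by `j`:
`∏_{ℓ=1}^{ρ} (1 + z_{ℓ,1}^{t_{ℓ,1}^j} q^{b^j} + ⋯ + z_{ℓ,λ_ℓ}^{t_{ℓ,λ_ℓ}^j} q^{λ_ℓ b^j})`. -/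
noncomputable def OmegaFactor (b ρ : ℕ) (Λ : Fin ρ → ℕ) (T : ColorIdx ρ Λ → ℕ) (j : ℕ) :
    PowerSeries (MvPolynomial (ColorIdx ρ Λ) ℤ) :=
  ∏ ℓ : Fin ρ,
    (1 + ∑ i : Fin (Λ ℓ),
      PowerSeries.C
          ((X (⟨ℓ, i⟩ : ColorIdx ρ Λ) : MvPolynomial (ColorIdx ρ Λ) ℤ) ^ T ⟨ℓ, i⟩ ^ j) *
        PowerSeries.X ^ ((i.1 + 1) * b ^ j))

/-- `Ω` is (characterized as being) defined by the generating function
`∑_{n≥0} Ω(n; Z) q^n = ∏_{j≥0} OmegaFactor j`; the infinite product is rendered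
coefficientwise via its stabilized partial products (`n < b^N`). -/
def IsOmega (b ρ : ℕ) (Λ : Fin ρ → ℕ) (T : ColorIdx ρ Λ → ℕ)
    (Om : ℕ → MvPolynomial (ColorIdx ρ Λ) ℤ) : Prop :=
  ∀ n N : ℕ, n < b ^ N →
    PowerSeries.coeff n
      (∏ j ∈ Finset.range N, OmegaFactor b ρ Λ T j) = Om n

/-- The substitution `Z ↦ Z^T`, replacing each variable `z_{ℓ,i}` by `z_{ℓ,i}^{t_{ℓ,i}}`. -/
noncomputable def substT (ρ : ℕ) (Λ : Fin ρ → ℕ) (T : ColorIdx ρ Λ → ℕ)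
    (p : MvPolynomial (ColorIdx ρ Λ) ℤ) : MvPolynomial (ColorIdx ρ Λ) ℤ :=
  aeval (fun v : ColorIdx ρ Λ => (X v : MvPolynomial (ColorIdx ρ Λ) ℤ) ^ T v) p

/-- `Ycoeff ν = ∑ z_{1,i₁} ⋯ z_{ρ,i_ρ}`, summed over all `(i₁, …, i_ρ)` with
`i₁ + ⋯ + i_ρ = ν` and `0 ≤ i_ℓ ≤ λ_ℓ`, where `z_{ℓ,0} = 1`.  (In particular
`Ycoeff 0 = 1` and `Ycoeff μ = 0` for `μ > λ₁ + ⋯ + λ_ρ`.) -/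
noncomputable def Ycoeff (ρ : ℕ) (Λ : Fin ρ → ℕ) (ν : ℕ) :
    MvPolynomial (ColorIdx ρ Λ) ℤ :=
  ∑ i : (ℓ : Fin ρ) → Fin (Λ ℓ + 1),
    if (∑ ℓ, (i ℓ : ℕ)) = ν then
      ∏ ℓ, (if h : (i ℓ : ℕ) = 0 then 1 else
        (X (⟨ℓ, ⟨(i ℓ : ℕ) - 1, by have := (i ℓ).isLt; omega⟩⟩ : ColorIdx ρ Λ) :
          MvPolynomial (ColorIdx ρ Λ) ℤ))
    else 0

/-! ### Auxiliary lemmas -/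

section Aux

open Finset PowerSeries

lemma sum_range_offset' {M : Type*} [AddCommMonoid M] {b : ℕ} (hb : 0 < b) (s j : ℕ)
    (g : ℕ → M) (hg : ∀ k, k ≤ b * s + j → k % b ≠ j → g k = 0) :
    ∑ k ∈ Finset.range (b * s + j + 1), g k = ∑ u ∈ Finset.range (s + 1), g (b * u + j) := by
  have himg : ∑ k ∈ (Finset.range (s + 1)).image (fun u => b * u + j), g k
      = ∑ u ∈ Finset.range (s + 1), g (b * u + j) :=
    Finset.sum_image (fun x _ y _ h => Nat.eq_of_mul_eq_mul_left hb (by omega))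
  rw [← himg]
  refine (Finset.sum_subset ?_ ?_).symm
  · intro k hk
    simp only [Finset.mem_image, Finset.mem_range] at hk
    obtain ⟨u, hu, rfl⟩ := hk
    have : b * u ≤ b * s := Nat.mul_le_mul_left b (by omega)
    simp only [Finset.mem_range]; omega
  · intro k hk hnk
    simp only [Finset.mem_range] at hk
    refine hg k (by omega) ?_
    intro he
    apply hnk
    simp only [Finset.mem_image, Finset.mem_range]
    refine ⟨k / b, ?_, ?_⟩
    · have h1 : b * (k / b) + j = k := by
        conv_rhs => rw [← Nat.div_add_mod k b, he]
      have : b * (k / b) ≤ b * s := by omega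
      have := Nat.le_of_mul_le_mul_left this hb
      omega
    · conv_rhs => rw [← Nat.div_add_mod k b, he]

variable {A : Type*} [CommRing A]

lemma dil_mul (f : A →+* A) {b : ℕ} (hb : 0 < b) {φ φ' ψ ψ' : PowerSeries A}
    (hφ : ∀ m, coeff m φ = if b ∣ m then f (coeff (m / b) φ') else 0)
    (hψ : ∀ m, coeff m ψ = if b ∣ m then f (coeff (m / b) ψ') else 0) (m : ℕ) :
    coeff m (φ * ψ) = if b ∣ m then f (coeff (m / b) (φ' * ψ')) else 0 := by
  rw [PowerSeries.coeff_mul,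
    Finset.Nat.sum_antidiagonal_eq_sum_range_succ (fun a c => coeff a φ * coeff c ψ)]
  by_cases hm : b ∣ m
  · obtain ⟨s, rfl⟩ := hm
    rw [if_pos ⟨s, rfl⟩, Nat.mul_div_cancel_left s hb, PowerSeries.coeff_mul,
      Finset.Nat.sum_antidiagonal_eq_sum_range_succ (fun a c => coeff a φ' * coeff c ψ'),
      map_sum]
    have key := sum_range_offset' hb s 0
      (g := fun k => coeff k φ * coeff (b * s - k) ψ) ?_
    · rw [show (b * s).succ = b * s + 0 + 1 by omega, key]
      refine Finset.sum_congr rfl fun u hu => ?_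
      simp only [Finset.mem_range, Nat.succ_eq_add_one] at hu ⊢
      rw [add_zero, hφ, if_pos ⟨u, rfl⟩, Nat.mul_div_cancel_left u hb, hψ,
        show b * s - b * u = b * (s - u) by rw [Nat.mul_sub],
        if_pos ⟨s - u, rfl⟩, Nat.mul_div_cancel_left _ hb, map_mul]
    · intro k hk hkb
      rw [hφ, if_neg (by rw [Nat.dvd_iff_mod_eq_zero]; omega), zero_mul]
  · rw [if_neg hm]
    refine Finset.sum_eq_zero fun k hk => ?_
    simp only [Finset.mem_range] at hk
    by_cases hbk : b ∣ k
    · have : ¬ b ∣ (m - k) := fun h => hm (by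
        have : m = k + (m - k) := by omega
        rw [this]; exact Nat.dvd_add hbk h)
      rw [hψ, if_neg this, mul_zero]
    · rw [hφ, if_neg hbk, zero_mul]

lemma dil_prod (f : A →+* A) {b : ℕ} (hb : 0 < b) {ι : Type*} (s : Finset ι)
    (φ φ' : ι → PowerSeries A)
    (h : ∀ i ∈ s, ∀ m, coeff m (φ i) = if b ∣ m then f (coeff (m / b) (φ' i)) else 0) :
    ∀ m, coeff m (∏ i ∈ s, φ i) = if b ∣ m then f (coeff (m / b) (∏ i ∈ s, φ' i)) else 0 := by
  induction s using Finset.cons_induction with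
  | empty =>
    intro m
    simp only [Finset.prod_empty, PowerSeries.coeff_one]
    by_cases hm : m = 0
    · subst hm; simp
    · rw [if_neg hm]
      by_cases hd : b ∣ m
      · obtain ⟨c, rfl⟩ := hd
        have hc : c ≠ 0 := by rintro rfl; simp at hm
        rw [if_pos ⟨c, rfl⟩, Nat.mul_div_cancel_left c hb, if_neg hc, map_zero]
      · rw [if_neg hd]
  | cons a s ha ih =>
    intro m
    rw [Finset.prod_cons, Finset.prod_cons]
    exact dil_mul f hb (h a (Finset.mem_cons_self a s))
      (ih fun i hi => h i (Finset.mem_cons_of_mem hi)) m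

end Aux

section Factors

open Finset

variable (b ρ : ℕ) (Λ : Fin ρ → ℕ) (T : ColorIdx ρ Λ → ℕ)

/-- one factor of the inner product -/
noncomputable def Gfac (ℓ : Fin ρ) (j : ℕ) :
    PowerSeries (MvPolynomial (ColorIdx ρ Λ) ℤ) :=
  1 + ∑ i : Fin (Λ ℓ),
      PowerSeries.C
          ((X (⟨ℓ, i⟩ : ColorIdx ρ Λ) : MvPolynomial (ColorIdx ρ Λ) ℤ) ^ T ⟨ℓ, i⟩ ^ j) *
        PowerSeries.X ^ ((i.1 + 1) * b ^ j)

lemma OmegaFactor_eq (j : ℕ) : OmegaFactor b ρ Λ T j = ∏ ℓ : Fin ρ, Gfac b ρ Λ T ℓ j := rfl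

noncomputable def fT : MvPolynomial (ColorIdx ρ Λ) ℤ →+* MvPolynomial (ColorIdx ρ Λ) ℤ :=
  (aeval (fun v : ColorIdx ρ Λ => (X v : MvPolynomial (ColorIdx ρ Λ) ℤ) ^ T v)).toRingHom

lemma fT_apply (p : MvPolynomial (ColorIdx ρ Λ) ℤ) : fT ρ Λ T p = substT ρ Λ T p := rfl

lemma coeff_Gfac (ℓ : Fin ρ) (j m : ℕ) :
    PowerSeries.coeff m (Gfac b ρ Λ T ℓ j) =
      (if m = 0 then 1 else 0) +
        ∑ i : Fin (Λ ℓ), (if m = (i.1 + 1) * b ^ j then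
          (X (⟨ℓ, i⟩ : ColorIdx ρ Λ) : MvPolynomial (ColorIdx ρ Λ) ℤ) ^ T ⟨ℓ, i⟩ ^ j else 0) := by
  simp only [Gfac, map_add, map_sum, PowerSeries.coeff_one, PowerSeries.coeff_C_mul_X_pow]

lemma fT_X_pow (v : ColorIdx ρ Λ) (j : ℕ) :
    fT ρ Λ T ((X v : MvPolynomial (ColorIdx ρ Λ) ℤ) ^ T v ^ j) = X v ^ T v ^ (j + 1) := by
  have : fT ρ Λ T ((X v : MvPolynomial (ColorIdx ρ Λ) ℤ) ^ T v ^ j)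
      = ((X v : MvPolynomial (ColorIdx ρ Λ) ℤ) ^ T v) ^ T v ^ j := by
    simp [fT, map_pow]
  rw [this, ← pow_mul, ← pow_succ']

lemma Gfac_dil (hb : 0 < b) (ℓ : Fin ρ) (j m : ℕ) :
    PowerSeries.coeff m (Gfac b ρ Λ T ℓ (j + 1)) =
      if b ∣ m then fT ρ Λ T (PowerSeries.coeff (m / b) (Gfac b ρ Λ T ℓ j)) else 0 := by
  rw [coeff_Gfac, coeff_Gfac]
  by_cases hm : b ∣ m
  · obtain ⟨s, rfl⟩ := hm
    rw [if_pos (dvd_mul_right b s), Nat.mul_div_cancel_left s hb]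
    simp only [map_add, map_sum, apply_ite (fT ρ Λ T), map_one, map_zero, fT_X_pow]
    congr 1
    · refine if_congr ?_ rfl rfl
      rw [Nat.mul_eq_zero]; omega
    · refine Finset.sum_congr rfl fun i _ => ?_
      refine if_congr ?_ rfl rfl
      rw [pow_succ]
      constructor
      · intro h; exact Nat.eq_of_mul_eq_mul_left hb (by rw [h]; ring)
      · intro h; rw [h]; ring
  · rw [if_neg hm]
    have h0 : ¬ (m = 0) := by rintro rfl; exact hm (dvd_zero b)
    rw [if_neg h0, zero_add]
    refine Finset.sum_eq_zero fun i _ => ?_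
    rw [if_neg]
    rintro rfl
    exact hm ⟨(i.1 + 1) * b ^ j, by rw [pow_succ]; ring⟩

/-- closed form of a factor coefficient at `j = 0` -/
noncomputable def gfun (ℓ : Fin ρ) (m : ℕ) : MvPolynomial (ColorIdx ρ Λ) ℤ :=
  if h0 : m = 0 then 1 else if h : m ≤ Λ ℓ then
    (X (⟨ℓ, ⟨m - 1, by omega⟩⟩ : ColorIdx ρ Λ) : MvPolynomial (ColorIdx ρ Λ) ℤ) else 0

lemma coeff_Gfac_zero (ℓ : Fin ρ) (m : ℕ) :
    PowerSeries.coeff m (Gfac b ρ Λ T ℓ 0) = gfun ρ Λ ℓ m := by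
  rw [coeff_Gfac]
  simp only [pow_zero, mul_one, pow_one, gfun]
  by_cases h0 : m = 0
  · subst h0
    rw [dif_pos rfl, if_pos rfl]
    rw [Finset.sum_eq_zero fun i _ => if_neg (by omega), add_zero]
  · rw [dif_neg h0, if_neg h0, zero_add]
    by_cases h : m ≤ Λ ℓ
    · rw [dif_pos h]
      rw [Finset.sum_eq_single (⟨m - 1, by omega⟩ : Fin (Λ ℓ))]
      · rw [if_pos (by simp; omega)]
      · intro i _ hi
        refine if_neg fun he => hi ?_
        apply Fin.ext; simp; omega
      · intro hmem; exact absurd (Finset.mem_univ _) hmem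
    · rw [dif_neg h]
      refine Finset.sum_eq_zero fun i _ => if_neg (by have := i.isLt; omega)

lemma coeff_F0 (ν : ℕ) :
    PowerSeries.coeff ν (OmegaFactor b ρ Λ T 0) = Ycoeff ρ Λ ν := by
  rw [OmegaFactor_eq, PowerSeries.coeff_prod]
  have hstep : ∀ l ∈ Finset.finsuppAntidiag (Finset.univ : Finset (Fin ρ)) ν,
      ∏ ℓ, PowerSeries.coeff (l ℓ) (Gfac b ρ Λ T ℓ 0) = ∏ ℓ, gfun ρ Λ ℓ (l ℓ) :=
    fun l _ => Finset.prod_congr rfl fun ℓ _ => coeff_Gfac_zero b ρ Λ T ℓ (l ℓ)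
  rw [Finset.sum_congr rfl hstep]
  have hvan : ∀ l ∈ Finset.finsuppAntidiag (Finset.univ : Finset (Fin ρ)) ν,
      (∏ ℓ, gfun ρ Λ ℓ (l ℓ)) ≠ 0 → ∀ ℓ, l ℓ ≤ Λ ℓ := by
    intro l _ hne
    by_contra hc
    push_neg at hc
    obtain ⟨ℓ, hℓ⟩ := hc
    exact hne (Finset.prod_eq_zero (Finset.mem_univ ℓ)
      (by rw [gfun, dif_neg (by omega), dif_neg (by omega)]))
  rw [← Finset.sum_filter_of_ne hvan, Ycoeff, ← Finset.sum_filter]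
  refine Finset.sum_nbij' (fun l => fun ℓ => (⟨min (l ℓ) (Λ ℓ), by omega⟩ : Fin (Λ ℓ + 1)))
    (fun i => Finsupp.equivFunOnFinite.symm (fun ℓ => (i ℓ : ℕ))) ?_ ?_ ?_ ?_ ?_
  · intro l hl
    simp only [Finset.mem_filter, Finset.mem_finsuppAntidiag] at hl ⊢
    refine ⟨Finset.mem_univ _, ?_⟩
    rw [← hl.1.1]
    exact Finset.sum_congr rfl fun ℓ _ => by simp [min_eq_left (hl.2 ℓ)]
  · intro i hi
    simp only [Finset.mem_filter, Finset.mem_finsuppAntidiag, Finset.mem_univ, true_and] at hi ⊢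
    refine ⟨⟨?_, fun x _ => Finset.mem_univ x⟩, fun ℓ => ?_⟩
    · rw [← hi]
      exact Finset.sum_congr rfl fun ℓ _ => by simp
    · simp; have := (i ℓ).isLt; omega
  · intro l hl
    simp only [Finset.mem_filter, Finset.mem_finsuppAntidiag] at hl
    ext ℓ
    simp [min_eq_left (hl.2 ℓ)]
  · intro i hi
    funext ℓ
    apply Fin.ext
    simp
    omega
  · intro l hl
    simp only [Finset.mem_filter, Finset.mem_finsuppAntidiag] at hl
    refine Finset.prod_congr rfl fun ℓ _ => ?_
    have hmin : l ℓ ⊓ Λ ℓ = l ℓ := min_eq_left (hl.2 ℓ)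
    rw [gfun]
    simp only [hmin]
    by_cases h0 : l ℓ = 0
    · rw [dif_pos h0, dif_pos h0]
    · rw [dif_neg h0, dif_pos (hl.2 ℓ), dif_neg h0]

end Factors

lemma Ycoeff_zero (ρ : ℕ) (Λ : Fin ρ → ℕ) : Ycoeff ρ Λ 0 = 1 := by
  rw [Ycoeff]
  rw [Finset.sum_eq_single (fun ℓ => (0 : Fin (Λ ℓ + 1)))]
  · simp
  · intro i _ hi
    rw [if_neg]
    intro hs
    apply hi
    funext ℓ
    have h0 : (i ℓ : ℕ) = 0 := Finset.sum_eq_zero_iff.mp hs ℓ (Finset.mem_univ ℓ)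
    exact Fin.ext h0
  · intro h; exact absurd (Finset.mem_univ _) h

lemma Ycoeff_eq_zero_of_gt (ρ : ℕ) (Λ : Fin ρ → ℕ) (μ : ℕ) (h : (∑ ℓ, Λ ℓ) < μ) :
    Ycoeff ρ Λ μ = 0 := by
  rw [Ycoeff]
  refine Finset.sum_eq_zero fun i _ => if_neg fun hs => ?_
  have : (∑ ℓ, (i ℓ : ℕ)) ≤ ∑ ℓ, Λ ℓ :=
    Finset.sum_le_sum fun ℓ _ => by have := (i ℓ).isLt; omega
  omega

/-- Recurrence for the polynomials `Ω_{b,T}^Λ`: `Ω(0; Z) = 1` and for `n ≥ 0`,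
`0 ≤ j ≤ b-1`, `Ω(bn + j; Z) = ∑_{k=0}^{⌊λ/b⌋} Y_{bk+j} Ω(n-k; Z^T)`, with the
convention `Ω(m; Z) = 0` for `m < 0` (rendered by the `if k ≤ n` guard). -/
theorem Omega_recurrence (b ρ : ℕ) (hb : 2 ≤ b) (hρ : 1 ≤ ρ)
    (Λ : Fin ρ → ℕ) (hΛ : ∀ ℓ, 1 ≤ Λ ℓ) (T : ColorIdx ρ Λ → ℕ) (hT : ∀ v, 1 ≤ T v)
    (Om : ℕ → MvPolynomial (ColorIdx ρ Λ) ℤ) (hOm : IsOmega b ρ Λ T Om) :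
    Om 0 = 1 ∧
    ∀ n j : ℕ, j ≤ b - 1 →
      Om (b * n + j) =
        ∑ k ∈ Finset.range ((∑ ℓ, Λ ℓ) / b + 1),
          Ycoeff ρ Λ (b * k + j) *
            (if k ≤ n then substT ρ Λ T (Om (n - k)) else 0) := by
  have hb0 : 0 < b := by omega
  constructor
  · rw [← hOm 0 1 (by rw [pow_one]; omega), Finset.prod_range_one, coeff_F0, Ycoeff_zero]
  intro n j hj
  have hjb : j < b := by omega
  have hnN : n < b ^ n := lt_of_lt_of_le ((Nat.lt_two_pow_self (n := n))) (Nat.pow_le_pow_left hb n)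
  have h1 : b * n + j < b ^ (n + 1) := by
    have h2 : b * (n + 1) ≤ b * b ^ n := Nat.mul_le_mul_left b (by omega)
    have h3 : b * (n + 1) = b * n + b := Nat.mul_succ b n
    calc b * n + j < b * (n + 1) := by omega
      _ ≤ b * b ^ n := h2
      _ = b ^ (n + 1) := by rw [pow_succ]; ring
  rw [← hOm (b * n + j) (n + 1) h1, Finset.prod_range_succ']
  have hQ : ∀ m, PowerSeries.coeff m (∏ i ∈ Finset.range n, OmegaFactor b ρ Λ T (i + 1)) =
      if b ∣ m then fT ρ Λ T (PowerSeries.coeff (m / b)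
        (∏ i ∈ Finset.range n, OmegaFactor b ρ Λ T i)) else 0 := by
    refine dil_prod (fT ρ Λ T) hb0 _ _ _ (fun i _ m => ?_)
    rw [OmegaFactor_eq, OmegaFactor_eq]
    exact dil_prod (fT ρ Λ T) hb0 _ _ _ (fun ℓ _ m' => Gfac_dil b ρ Λ T hb0 ℓ i m') m
  rw [mul_comm (∏ i ∈ Finset.range n, OmegaFactor b ρ Λ T (i + 1)) (OmegaFactor b ρ Λ T 0),
    PowerSeries.coeff_mul,
    Finset.Nat.sum_antidiagonal_eq_sum_range_succ
      (fun a c => PowerSeries.coeff a (OmegaFactor b ρ Λ T 0) *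
        PowerSeries.coeff c (∏ i ∈ Finset.range n, OmegaFactor b ρ Λ T (i + 1)))]
  have key := sum_range_offset' hb0 n j
    (g := fun k => PowerSeries.coeff k (OmegaFactor b ρ Λ T 0) *
      PowerSeries.coeff ((b * n + j) - k) (∏ i ∈ Finset.range n, OmegaFactor b ρ Λ T (i + 1)))
    ?_
  · rw [show (b * n + j).succ = b * n + j + 1 from rfl, key]
    have hterm : ∀ u ∈ Finset.range (n + 1),
        PowerSeries.coeff (b * u + j) (OmegaFactor b ρ Λ T 0) *
          PowerSeries.coeff ((b * n + j) - (b * u + j))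
            (∏ i ∈ Finset.range n, OmegaFactor b ρ Λ T (i + 1)) =
        Ycoeff ρ Λ (b * u + j) * (if u ≤ n then substT ρ Λ T (Om (n - u)) else 0) := by
      intro u hu
      simp only [Finset.mem_range] at hu
      have hub : u ≤ n := by omega
      have hdiff : (b * n + j) - (b * u + j) = b * (n - u) := by
        rw [Nat.mul_sub]; omega
      rw [coeff_F0, hdiff, hQ, if_pos (dvd_mul_right b (n - u)),
        Nat.mul_div_cancel_left _ hb0, hOm (n - u) n (by omega), fT_apply, if_pos hub]
    rw [Finset.sum_congr rfl hterm]
    set L := ∑ ℓ, Λ ℓ with hL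
    set M := max n (L / b) with hM
    rw [Finset.sum_subset (Finset.range_subset_range.mpr (show n + 1 ≤ M + 1 by omega))
      (fun u hu hnu => by
        simp only [Finset.mem_range] at hu hnu
        rw [if_neg (by omega), mul_zero])]
    refine (Finset.sum_subset (Finset.range_subset_range.mpr (show L / b + 1 ≤ M + 1 by omega)) ?_).symm
    intro u hu hnu
    simp only [Finset.mem_range] at hu hnu
    have hk : L / b + 1 ≤ u := by omega
    have hmul : b * (L / b + 1) ≤ b * u := Nat.mul_le_mul_left b hk
    have hsucc : b * (L / b + 1) = b * (L / b) + b := Nat.mul_succ b (L / b)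
    have hdm := Nat.div_add_mod L b
    have hmod : L % b < b := Nat.mod_lt _ hb0
    have hgt : L < b * u + j := by omega
    rw [Ycoeff_eq_zero_of_gt ρ Λ _ hgt, zero_mul]
  · intro k hk hkmod
    have hnd : ¬ b ∣ (b * n + j - k) := by
      intro hd
      obtain ⟨c, hc⟩ := hd
      have h2 : k + b * c = b * n + j := by omega
      have h3 : k % b = j % b := by
        calc k % b = (k + b * c) % b := (Nat.add_mul_mod_self_left k b c).symm
        _ = (b * n + j) % b := by rw [h2]
        _ = j % b := by rw [Nat.mul_add_mod]
      rw [Nat.mod_eq_of_lt hjb] at h3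
      exact hkmod h3
    rw [hQ, if_neg hnd, mul_zero]
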